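/- Under the hypotheses of the residual bound for the restarted solver with compression (‖E_Z⁽ʲ⁾‖ ≤ δ, ‖E_R⁽ʲ⁾‖ ≤ δ, ‖R⁽ᵏ̄⁾‖ ≤ ε), and assuming additionally that A and B are normal with eigenvalues of nonnegative real part and Re(λ_{A,1}) + Re(λ_{B,1}) > 0, the exact solution X of A X + X B + C D* = 0 and the computed X⁽ᵏ̄⁾ satisfy ‖X⁽ᵏ̄⁾ − X‖ ≤ (ε + (k̄+1)δ)/(Re(λ_{A,1}) + Re(λ_{B,1})) + (k̄+1)δ. -/

import Mathlib

open Matrix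

noncomputable def specNorm {m n : Type*} [Fintype m] [Fintype n] [DecidableEq n]
    (M : Matrix m n ℂ) : ℝ :=
  ‖LinearMap.toContinuousLinearMap (Matrix.toEuclideanLin M)‖

set_option maxHeartbeats 1000000
set_option synthInstance.maxHeartbeats 1000000

section Helpers

variable {n : ℕ}

local notation "𝔼" => EuclideanSpace ℂ (Fin n)
local notation "⟪" x ", " y "⟫" => @inner ℂ _ _ x y

lemma toEuclideanCLM_eq (M : Matrix (Fin n) (Fin n) ℂ) :
    Matrix.toEuclideanCLM (𝕜 := ℂ) M = LinearMap.toContinuousLinearMap (Matrix.toEuclideanLin M) := by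
  apply ContinuousLinearMap.coe_injective
  exact Matrix.coe_toEuclideanCLM_eq_toEuclideanLin M

lemma specNorm_eq (M : Matrix (Fin n) (Fin n) ℂ) :
    specNorm M = ‖Matrix.toEuclideanCLM (𝕜 := ℂ) M‖ := by
  rw [toEuclideanCLM_eq]; rfl

lemma normal_clm (M : Matrix (Fin n) (Fin n) ℂ) (hM : M * Mᴴ = Mᴴ * M) :
    IsStarNormal (Matrix.toEuclideanCLM (𝕜 := ℂ) M) := by
  constructor
  have h : star M * M = M * star M := by
    simpa [Matrix.star_eq_conjTranspose] using hM.symm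
  rw [Commute, SemiconjBy, ← map_star, ← _root_.map_mul, ← _root_.map_mul, h]

lemma re_inner_lower (M : Matrix (Fin n) (Fin n) ℂ) (hM : M * Mᴴ = Mᴴ * M)
    {a : ℝ} (ha : IsLeast (Complex.re '' spectrum ℂ M) a)
    (u : 𝔼) (hu : ‖u‖ = 1) :
    a ≤ (⟪u, (Matrix.toEuclideanCLM (𝕜 := ℂ) M) u⟫).re := by
  haveI : Nontrivial 𝔼 := by
    refine ⟨u, 0, fun h => ?_⟩
    rw [h] at hu; simp at hu
  set T := Matrix.toEuclideanCLM (𝕜 := ℂ) M with hT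
  have hTn : IsStarNormal T := normal_clm M hM
  set h := T + star T with hh
  have hsa : IsSelfAdjoint h := IsSelfAdjoint.add_star_self T
  have hspecT : spectrum ℂ T = spectrum ℂ M :=
    AlgEquiv.spectrum_eq (Matrix.toEuclideanCLM (𝕜 := ℂ)) M
  have hspec : spectrum ℂ h = (fun z : ℂ => z + star z) '' spectrum ℂ M := by
    have h1 : cfc (fun z : ℂ => z + star z) T = T + star T := by
      rw [cfc_add (a := T) (fun z : ℂ => z) (fun z : ℂ => star z) (by fun_prop)
          (continuous_star.continuousOn), cfc_id' ℂ T hTn, cfc_star_id T hTn]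
    rw [hh, ← h1, cfc_map_spectrum (a := T) (f := fun z : ℂ => z + star z) hTn
      ((continuous_id.add continuous_star).continuousOn), hspecT]
  have key1 : ∀ z ∈ spectrum ℂ h, ∃ r : ℝ, z = (r : ℂ) ∧ 2 * a ≤ r ∧ r ≤ ‖h‖ := by
    intro z hz
    have hz' := hz
    rw [hspec] at hz'
    obtain ⟨lam, hlam, rfl⟩ := hz'
    have h2 : lam + star lam = ((2 * lam.re : ℝ) : ℂ) := by
      rw [Complex.star_def]; exact Complex.add_conj lam
    refine ⟨2 * lam.re, h2, by have := ha.2 ⟨lam, hlam, rfl⟩; linarith, ?_⟩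
    have h1 : ‖lam + star lam‖ ≤ ‖h‖ := spectrum.norm_le_norm_of_mem hz
    rw [h2] at h1
    simp only [Complex.norm_real] at h1
    exact le_trans (le_abs_self _) h1
  obtain ⟨lam0, hlam0, hre0⟩ := ha.1
  have h2a : 2 * a ≤ ‖h‖ := by
    obtain ⟨r, _, hr1, hr2⟩ := key1 (lam0 + star lam0)
      (by rw [hspec]; exact ⟨lam0, hlam0, rfl⟩)
    linarith
  set c : ℝ := (2 * a + ‖h‖) / 2 with hc
  set g := h - algebraMap ℂ _ (c : ℂ) with hg
  have hconst : IsSelfAdjoint (algebraMap ℂ (𝔼 →L[ℂ] 𝔼) (c : ℂ)) := by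
    rw [isSelfAdjoint_iff, ← algebraMap_star_comm, Complex.star_def, Complex.conj_ofReal]
  have hg_sa : IsSelfAdjoint g := IsSelfAdjoint.sub (R := 𝔼 →L[ℂ] 𝔼) hsa hconst
  have hgspec : ∀ w ∈ spectrum ℂ g, ‖w‖ ≤ (‖h‖ - 2 * a) / 2 := by
    intro w hw
    rw [hg, ← spectrum.sub_singleton_eq] at hw
    obtain ⟨z, hz, w', hw', rfl⟩ := hw
    obtain ⟨r, rfl, hr1, hr2⟩ := key1 z hz
    simp only [Set.mem_singleton_iff] at hw'
    subst hw'
    show ‖(r : ℂ) - (c : ℂ)‖ ≤ (‖h‖ - 2 * a) / 2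
    have : (r : ℂ) - (c : ℂ) = ((r - c : ℝ) : ℂ) := by push_cast; ring
    rw [this, Complex.norm_real, Real.norm_eq_abs, abs_le]
    constructor <;> rw [hc] <;> [linarith; linarith]
  have hgnorm : ‖g‖ ≤ (‖h‖ - 2 * a) / 2 := by
    rw [← hg_sa.toReal_spectralRadius_complex_eq_norm]
    refine ENNReal.toReal_le_of_le_ofReal (by linarith) ?_
    rw [spectralRadius]
    refine iSup₂_le fun z hz => ?_
    have := hgspec z hz
    calc (‖z‖₊ : ENNReal) = ENNReal.ofReal ‖z‖ := (ofReal_norm z).symm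
      _ ≤ _ := ENNReal.ofReal_le_ofReal this
  have hsum : (⟪u, h u⟫).re = 2 * (⟪u, T u⟫).re := by
    have h3 : ⟪u, (star T) u⟫ = starRingEnd ℂ ⟪u, T u⟫ := by
      rw [ContinuousLinearMap.star_eq_adjoint, ContinuousLinearMap.adjoint_inner_right,
        ← inner_conj_symm]
    rw [hh]
    simp only [ContinuousLinearMap.add_apply, inner_add_right, h3]
    simp [Complex.add_re]
    rw [← inner_conj_symm (T u) u, Complex.conj_re]
    ring
  have hgu : (⟪u, g u⟫).re = (⟪u, h u⟫).re - c := by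
    rw [hg]
    simp only [ContinuousLinearMap.sub_apply, inner_sub_right]
    have h4 : (algebraMap ℂ (𝔼 →L[ℂ] 𝔼) (c : ℂ)) u = (c : ℂ) • u := by
      rw [Algebra.algebraMap_eq_smul_one]; simp
    rw [h4, inner_smul_right, inner_self_eq_norm_sq_to_K, hu]
    simp
  have hbound : -‖g‖ ≤ (⟪u, g u⟫).re := by
    have h1 : ‖⟪u, g u⟫‖ ≤ ‖g‖ := by
      calc ‖⟪u, g u⟫‖ ≤ ‖u‖ * ‖g u‖ := norm_inner_le_norm _ _
        _ ≤ ‖u‖ * (‖g‖ * ‖u‖) := mul_le_mul_of_nonneg_left (g.le_opNorm u) (norm_nonneg _)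
        _ = ‖g‖ := by rw [hu]; ring
    have h2 : |(⟪u, g u⟫).re| ≤ ‖⟪u, g u⟫‖ := Complex.abs_re_le_norm _
    linarith [abs_le.mp (le_trans h2 h1) |>.1]
  have h5 : 2 * a ≤ (⟪u, h u⟫).re := by
    rw [hc] at hgu; nlinarith
  linarith [hsum ▸ h5]

lemma exists_norm_attained (T : 𝔼 →L[ℂ] 𝔼) (hT : T ≠ 0) :
    ∃ v : 𝔼, ‖v‖ = 1 ∧ ‖T v‖ = ‖T‖ := by
  have hx : ∃ x, T x ≠ 0 := by
    by_contra hc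
    push_neg at hc
    exact hT (ContinuousLinearMap.ext fun x => by simp [hc x])
  obtain ⟨x, hx⟩ := hx
  have hx0 : x ≠ 0 := fun h => hx (by simp [h])
  have hx0' : ‖x‖ ≠ 0 := norm_ne_zero_iff.2 hx0
  set v₀ : 𝔼 := ((‖x‖⁻¹ : ℝ) : ℂ) • x with hv₀
  have hv₀1 : v₀ ∈ Metric.sphere (0 : 𝔼) 1 := by
    rw [mem_sphere_zero_iff_norm, hv₀, norm_smul]
    simp [abs_of_nonneg, inv_mul_cancel₀ hx0']
  have hcont : ContinuousOn (fun v : 𝔼 => ‖T v‖) (Metric.sphere (0 : 𝔼) 1) :=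
    (continuous_norm.comp T.continuous).continuousOn
  obtain ⟨v, hv, hmax⟩ := (isCompact_sphere (0 : 𝔼) 1).exists_isMaxOn ⟨v₀, hv₀1⟩ hcont
  rw [mem_sphere_zero_iff_norm] at hv
  refine ⟨v, hv, le_antisymm (by simpa [hv] using T.le_opNorm v) ?_⟩
  refine T.opNorm_le_bound (norm_nonneg _) fun y => ?_
  rcases eq_or_ne y 0 with rfl | hy0
  · simp
  · have hy0' : ‖y‖ ≠ 0 := norm_ne_zero_iff.2 hy0
    set w : 𝔼 := ((‖y‖⁻¹ : ℝ) : ℂ) • y with hw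
    have hwmem : w ∈ Metric.sphere (0 : 𝔼) 1 := by
      rw [mem_sphere_zero_iff_norm, hw, norm_smul]
      simp [inv_mul_cancel₀ hy0']
    have h1 : ‖T w‖ ≤ ‖T v‖ := hmax hwmem
    have h2 : ‖T w‖ = ‖y‖⁻¹ * ‖T y‖ := by
      rw [hw, _root_.map_smul, norm_smul]
      simp
    rw [h2] at h1
    calc ‖T y‖ = ‖y‖ * (‖y‖⁻¹ * ‖T y‖) := by field_simp
      _ ≤ ‖y‖ * ‖T v‖ := mul_le_mul_of_nonneg_left h1 (norm_nonneg _)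
      _ = ‖T v‖ * ‖y‖ := mul_comm _ _

lemma sylvester_bound (A B Y : Matrix (Fin n) (Fin n) ℂ)
    (hA : A * Aᴴ = Aᴴ * A) (hB : B * Bᴴ = Bᴴ * B)
    {a b : ℝ}
    (ha : IsLeast (Complex.re '' spectrum ℂ A) a)
    (hb : IsLeast (Complex.re '' spectrum ℂ B) b) :
    (a + b) * specNorm Y ≤ specNorm (A * Y + Y * B) := by
  set TA := Matrix.toEuclideanCLM (𝕜 := ℂ) A with hTA
  set TB := Matrix.toEuclideanCLM (𝕜 := ℂ) B with hTB
  set TY := Matrix.toEuclideanCLM (𝕜 := ℂ) Y with hTY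
  by_cases hY : TY = 0
  · have h0 : specNorm Y = 0 := by rw [specNorm_eq, ← hTY, hY, norm_zero]
    rw [h0, mul_zero]
    rw [specNorm_eq]
    exact norm_nonneg _
  · set σ : ℝ := ‖TY‖ with hσdef
    have hσ : 0 < σ := norm_pos_iff.2 hY
    obtain ⟨v, hv1, hv2⟩ := exists_norm_attained TY hY
    set u : 𝔼 := ((σ⁻¹ : ℝ) : ℂ) • TY v with hu_def
    have hu1 : ‖u‖ = 1 := by
      rw [hu_def, norm_smul, hv2, Complex.norm_real, Real.norm_eq_abs, abs_of_nonneg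
        (inv_nonneg.2 hσ.le), ← hσdef, inv_mul_cancel₀ hσ.ne']
    have hTYv : TY v = ((σ : ℝ) : ℂ) • u := by
      rw [hu_def, smul_smul]
      push_cast
      rw [mul_inv_cancel₀ (by exact_mod_cast hσ.ne')]
      simp
    have hadj : (ContinuousLinearMap.adjoint TY) u = ((σ : ℝ) : ℂ) • v := by
      have hin : ⟪(ContinuousLinearMap.adjoint TY) u, v⟫ = ((σ : ℝ) : ℂ) := by
        rw [ContinuousLinearMap.adjoint_inner_left, hTYv, inner_smul_right,
          inner_self_eq_norm_sq_to_K, hu1]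
        simp
      have hnorm : ‖(ContinuousLinearMap.adjoint TY) u‖ ≤ σ := by
        calc ‖(ContinuousLinearMap.adjoint TY) u‖
            ≤ ‖ContinuousLinearMap.adjoint TY‖ * ‖u‖ := ContinuousLinearMap.le_opNorm _ _
          _ = σ := by
              rw [hu1, mul_one, hσdef]
              exact LinearIsometryEquiv.norm_map (ContinuousLinearMap.adjoint) TY
      have hsq : ‖(ContinuousLinearMap.adjoint TY) u - ((σ : ℝ) : ℂ) • v‖ ^ 2 ≤ 0 := by
        rw [@norm_sub_sq ℂ]
        have h1 : (RCLike.re ⟪(ContinuousLinearMap.adjoint TY) u, ((σ : ℝ) : ℂ) • v⟫ : ℝ)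
            = σ * σ := by
          rw [inner_smul_right, hin]
          simp [Complex.re_ofReal_mul]
        rw [h1, norm_smul, hv1]
        simp only [Complex.norm_real, Real.norm_eq_abs, mul_one]
        rw [abs_of_nonneg hσ.le]
        nlinarith [hnorm, norm_nonneg ((ContinuousLinearMap.adjoint TY) u)]
      have := le_antisymm hsq (sq_nonneg _)
      have h0 : ‖(ContinuousLinearMap.adjoint TY) u - ((σ : ℝ) : ℂ) • v‖ = 0 := by
        nlinarith [norm_nonneg ((ContinuousLinearMap.adjoint TY) u - ((σ : ℝ) : ℂ) • v)]
      rw [norm_eq_zero, sub_eq_zero] at h0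
      exact h0
    -- main computation
    set TG := Matrix.toEuclideanCLM (𝕜 := ℂ) (A * Y + Y * B) with hTG
    have hTGeq : TG = TA * TY + TY * TB := by
      rw [hTG, map_add, _root_.map_mul, _root_.map_mul]
    have hsplit : ⟪u, TG v⟫ = ((σ : ℝ) : ℂ) * ⟪u, TA u⟫ + ((σ : ℝ) : ℂ) * ⟪v, TB v⟫ := by
      rw [hTGeq]
      simp only [ContinuousLinearMap.add_apply, ContinuousLinearMap.mul_apply, inner_add_right]
      congr 1
      · rw [hTYv, _root_.map_smul, inner_smul_right]
      · rw [← ContinuousLinearMap.adjoint_inner_left, hadj, inner_smul_left]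
        simp [Complex.conj_ofReal]
    have hre : σ * (a + b) ≤ (⟪u, TG v⟫).re := by
      rw [hsplit]
      have h1 := re_inner_lower A hA ha u hu1
      have h2 := re_inner_lower B hB hb v hv1
      simp only [Complex.add_re, Complex.re_ofReal_mul]
      rw [← hTA] at h1; rw [← hTB] at h2
      nlinarith [hσ.le]
    have hup : (⟪u, TG v⟫).re ≤ specNorm (A * Y + Y * B) := by
      rw [specNorm_eq, ← hTG]
      calc (⟪u, TG v⟫).re ≤ ‖⟪u, TG v⟫‖ := Complex.re_le_norm _
        _ ≤ ‖u‖ * ‖TG v‖ := norm_inner_le_norm _ _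
        _ ≤ ‖u‖ * (‖TG‖ * ‖v‖) := mul_le_mul_of_nonneg_left (TG.le_opNorm v) (norm_nonneg _)
        _ = ‖TG‖ := by rw [hu1, hv1]; ring
    have : specNorm Y = σ := by rw [specNorm_eq, ← hTY]
    rw [this]
    nlinarith

lemma specNorm_nonneg (M : Matrix (Fin n) (Fin n) ℂ) : 0 ≤ specNorm M := by
  rw [specNorm_eq]; exact norm_nonneg _

lemma specNorm_sub_le (P Q : Matrix (Fin n) (Fin n) ℂ) :
    specNorm (P - Q) ≤ specNorm P + specNorm Q := by
  simp only [specNorm_eq, map_sub]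
  exact norm_sub_le _ _

lemma specNorm_add_le (P Q : Matrix (Fin n) (Fin n) ℂ) :
    specNorm (P + Q) ≤ specNorm P + specNorm Q := by
  simp only [specNorm_eq, map_add]
  exact norm_add_le _ _

lemma specNorm_sum_le {ι : Type*} (s : Finset ι) (f : ι → Matrix (Fin n) (Fin n) ℂ) :
    specNorm (∑ j ∈ s, f j) ≤ ∑ j ∈ s, specNorm (f j) := by
  simp only [specNorm_eq, map_sum]
  exact norm_sum_le _ _


end Helpers

/-- Error bound for the restarted Sylvester solver with compression, for normal coefficients
`A`, `B` whose spectra lie in the closed right half-plane: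
`‖X⁽ᵏ⁾ − X‖ ≤ (ε + (k+1)δ)/(Re λ_{A,1} + Re λ_{B,1}) + (k+1)δ`. -/
theorem restarted_compressed_error_bound {n s : ℕ}
    (A B X : Matrix (Fin n) (Fin n) ℂ) (C D : Matrix (Fin n) (Fin s) ℂ)
    (hA : A * Aᴴ = Aᴴ * A) (hB : B * Bᴴ = Bᴴ * B)
    (a b : ℝ)
    (ha : IsLeast (Complex.re '' spectrum ℂ A) a)
    (hb : IsLeast (Complex.re '' spectrum ℂ B) b)
    (ha0 : 0 ≤ a) (hb0 : 0 ≤ b) (hab : 0 < a + b)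
    (hX : A * X + X * B + C * Dᴴ = 0)
    (k : ℕ) (δ ε : ℝ)
    (Z EZ R ER : ℕ → Matrix (Fin n) (Fin n) ℂ)
    (h0 : A * Z 0 + Z 0 * B + C * Dᴴ = R 0)
    (hrec : ∀ j, 1 ≤ j → j ≤ k → A * Z j + Z j * B + R (j - 1) - ER (j - 1) = R j)
    (hEZ : ∀ j ≤ k, specNorm (EZ j) ≤ δ)
    (hER : ∀ j ≤ k, specNorm (ER j) ≤ δ)
    (hres : specNorm (R k) ≤ ε) :
    specNorm ((∑ j ∈ Finset.range (k + 1), (Z j - EZ j)) - X)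
      ≤ (ε + (k + 1) * δ) / (a + b) + (k + 1) * δ := by
  have δ0 : 0 ≤ δ := le_trans (specNorm_nonneg _) (hEZ 0 (Nat.zero_le k))
  have ε0 : 0 ≤ ε := le_trans (specNorm_nonneg _) hres
  have key : ∀ m, m ≤ k →
      A * (∑ j ∈ Finset.range (m + 1), Z j) + (∑ j ∈ Finset.range (m + 1), Z j) * B + C * Dᴴ
        = R m + ∑ j ∈ Finset.range m, ER j := by
    intro m
    induction m with
    | zero => intro _; simpa using h0
    | succ m ih =>
      intro hm
      have h1 := ih (le_trans (Nat.le_succ m) hm)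
      have h2 := hrec (m + 1) (Nat.succ_le_succ (Nat.zero_le m)) hm
      simp only [Nat.add_sub_cancel] at h2
      rw [Finset.sum_range_succ (fun j => Z j) (m + 1), Finset.sum_range_succ (fun j => ER j) m]
      set S := ∑ j ∈ Finset.range (m + 1), Z j with hSdef
      have e1 : A * (S + Z (m + 1)) + (S + Z (m + 1)) * B + C * Dᴴ
          = (A * S + S * B + C * Dᴴ) + (A * Z (m + 1) + Z (m + 1) * B) := by noncomm_ring
      have h3 : A * Z (m + 1) + Z (m + 1) * B = R (m + 1) + ER m - R m := by
        rw [← h2]; abel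
      rw [e1, h1, h3]
      abel
  set S := ∑ j ∈ Finset.range (k + 1), Z j with hSdef
  have hS := key k le_rfl
  have hG : A * (S - X) + (S - X) * B = R k + ∑ j ∈ Finset.range k, ER j := by
    have e1 : A * (S - X) + (S - X) * B
        = (A * S + S * B + C * Dᴴ) - (A * X + X * B + C * Dᴴ) := by noncomm_ring
    rw [e1, hS, hX, sub_zero]
  have hERsum : ∑ j ∈ Finset.range k, specNorm (ER j) ≤ k * δ := by
    calc ∑ j ∈ Finset.range k, specNorm (ER j) ≤ ∑ j ∈ Finset.range k, δ :=
          Finset.sum_le_sum fun j hj => hER j (le_of_lt (Finset.mem_range.mp hj))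
      _ = k * δ := by rw [Finset.sum_const, Finset.card_range, nsmul_eq_mul]
  have hGnorm : specNorm (R k + ∑ j ∈ Finset.range k, ER j) ≤ ε + k * δ := by
    calc specNorm (R k + ∑ j ∈ Finset.range k, ER j)
        ≤ specNorm (R k) + specNorm (∑ j ∈ Finset.range k, ER j) := specNorm_add_le _ _
      _ ≤ ε + ∑ j ∈ Finset.range k, specNorm (ER j) := by
          have := specNorm_sum_le (Finset.range k) ER
          linarith
      _ ≤ ε + k * δ := by linarith
  have hmain := sylvester_bound A B (S - X) hA hB ha hb
  rw [hG] at hmain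
  have hSX : specNorm (S - X) ≤ (ε + k * δ) / (a + b) := by
    rw [le_div_iff₀ hab]
    calc specNorm (S - X) * (a + b) = (a + b) * specNorm (S - X) := mul_comm _ _
      _ ≤ _ := le_trans hmain hGnorm
  have hEZsum : specNorm (∑ j ∈ Finset.range (k + 1), EZ j) ≤ (k + 1) * δ := by
    calc specNorm (∑ j ∈ Finset.range (k + 1), EZ j)
        ≤ ∑ j ∈ Finset.range (k + 1), specNorm (EZ j) := specNorm_sum_le _ _
      _ ≤ ∑ j ∈ Finset.range (k + 1), δ :=
          Finset.sum_le_sum fun j hj => hEZ j (Nat.lt_succ_iff.mp (Finset.mem_range.mp hj))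
      _ = (k + 1) * δ := by rw [Finset.sum_const, Finset.card_range, nsmul_eq_mul]; push_cast; ring
  have hsplit : (∑ j ∈ Finset.range (k + 1), (Z j - EZ j)) - X
      = (S - X) - ∑ j ∈ Finset.range (k + 1), EZ j := by
    rw [Finset.sum_sub_distrib, hSdef]
    abel
  rw [hsplit]
  have hfin : specNorm ((S - X) - ∑ j ∈ Finset.range (k + 1), EZ j)
      ≤ specNorm (S - X) + specNorm (∑ j ∈ Finset.range (k + 1), EZ j) := specNorm_sub_le _ _
  have hdiv : (ε + k * δ) / (a + b) ≤ (ε + (k + 1) * δ) / (a + b) := by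
    rw [div_le_div_iff₀ hab hab]
    nlinarith
  linarith
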